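/- There exist unit vectors a₁, a₂, b₁, b₂ ∈ S² ⊂ ℝ³ such that a₁·b₁ + a₁·b₂ + a₂·b₁ - a₂·b₂ = 2√2. Consequently, the quantum correlation E(AB|a,b) = -a·b attains the value -2√2 < -2 for the CHSH expression C(a₁,a₂,b₁,b₂) = E(a₁,b₁) + E(a₁,b₂) + E(a₂,b₁) - E(a₂,b₂), violating the CHSH inequality. -/
import Mathlib

open Metric
open scoped RealInnerProductSpace

/-- **Quantum violation of the CHSH inequality.**
There exist unit vectors `a₁, a₂, b₁, b₂ ∈ S² ⊂ ℝ³` with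
`a₁·b₁ + a₁·b₂ + a₂·b₁ - a₂·b₂ = 2√2`; consequently the quantum singlet correlation
`E(a,b) = -a·b` gives a CHSH value of `-2√2`, which is `< -2`. -/
theorem chsh_quantum_violation :
    ∃ a₁ a₂ b₁ b₂ : EuclideanSpace ℝ (Fin 3),
      ‖a₁‖ = 1 ∧ ‖a₂‖ = 1 ∧ ‖b₁‖ = 1 ∧ ‖b₂‖ = 1 ∧
      ⟪a₁, b₁⟫ + ⟪a₁, b₂⟫ + ⟪a₂, b₁⟫ - ⟪a₂, b₂⟫ = 2 * Real.sqrt 2 ∧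
      (-⟪a₁, b₁⟫) + (-⟪a₁, b₂⟫) + (-⟪a₂, b₁⟫) - (-⟪a₂, b₂⟫) = -(2 * Real.sqrt 2) ∧
      (-(2 * Real.sqrt 2) : ℝ) < -2 := by
  have h2 : Real.sqrt 2 > 0 := Real.sqrt_pos.mpr (by norm_num)
  have hs : Real.sqrt 2 * Real.sqrt 2 = 2 := Real.mul_self_sqrt (by norm_num)
  have hgt : Real.sqrt 2 > 1 := by
    nlinarith [Real.sq_sqrt (by norm_num : (2:ℝ) ≥ 0)]
  refine ⟨(WithLp.equiv 2 (Fin 3 → ℝ)).symm ![1, 0, 0], (WithLp.equiv 2 (Fin 3 → ℝ)).symm ![0, 1, 0],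
    (WithLp.equiv 2 (Fin 3 → ℝ)).symm ![1 / Real.sqrt 2, 1 / Real.sqrt 2, 0],
    (WithLp.equiv 2 (Fin 3 → ℝ)).symm ![1 / Real.sqrt 2, -(1 / Real.sqrt 2), 0], ?_, ?_, ?_, ?_, ?_, ?_, ?_⟩
  · simp [EuclideanSpace.norm_eq, Fin.sum_univ_three]
  · simp [EuclideanSpace.norm_eq, Fin.sum_univ_three]
  · rw [EuclideanSpace.norm_eq]
    simp [Fin.sum_univ_three]
    norm_num
  · rw [EuclideanSpace.norm_eq]
    simp [Fin.sum_univ_three]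
    norm_num
  · simp [PiLp.inner_apply, Fin.sum_univ_three]
    field_simp
    nlinarith
  · simp [PiLp.inner_apply, Fin.sum_univ_three]
    field_simp
    nlinarith
  · linarith
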